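/- Let f, g be in B(X,P). Then f D g in B(X,P) if and only if for every cardinal lambda, the cardinality of {i in I : |f(X_i)| = lambda} equals the cardinality of {i in I : |g(X_i)| = lambda}. -/
import Mathlib


open Cardinal

/-- `P : I → Set X` is a partition of `X`: blocks are nonempty, pairwise disjoint,
and cover `X`. -/
def IsPartition {X I : Type*} (P : I → Set X) : Prop :=
  (∀ i, (P i).Nonempty) ∧ Pairwise (Function.onFun Disjoint P) ∧ ∀ x, ∃ i, x ∈ P i

/-- `f` belongs to `B(X,P)` with character `χ`: `f` maps each block `P i` into the
block `P (χ i)`, and `χ` is a bijection of the index set. -/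
def MemB {X I : Type*} (P : I → Set X) (f : X → X) (χ : I → I) : Prop :=
  (∀ i, Set.MapsTo f (P i) (P (χ i))) ∧ Function.Bijective χ

/-- Green's `L` relation on `B(X,P)` (left-to-right composition: `f = hg` means
`f x = g (h x)`). -/
def GreenL {X I : Type*} (P : I → Set X) (f g : X → X) : Prop :=
  ∃ h χh h' χh', MemB P h χh ∧ MemB P h' χh' ∧
    (∀ x, f x = g (h x)) ∧ (∀ x, g x = f (h' x))

/-- Green's `R` relation on `B(X,P)` (`f = gh` means `f x = h (g x)`). -/
def GreenR {X I : Type*} (P : I → Set X) (f g : X → X) : Prop :=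
  ∃ h χh h' χh', MemB P h χh ∧ MemB P h' χh' ∧
    (∀ x, f x = h (g x)) ∧ (∀ x, g x = h' (f x))

/-- Green's `D` relation on `B(X,P)`. -/
def GreenD {X I : Type*} (P : I → Set X) (f g : X → X) : Prop :=
  ∃ k χk, MemB P k χk ∧ GreenL P f k ∧ GreenR P k g

/-- Green's `J` relation on `B(X,P)` (`f = h₁ g h₂` means `f x = h₂ (g (h₁ x))`). -/
def GreenJ {X I : Type*} (P : I → Set X) (f g : X → X) : Prop :=
  (∃ h1 χ1 h2 χ2, MemB P h1 χ1 ∧ MemB P h2 χ2 ∧ ∀ x, f x = h2 (g (h1 x))) ∧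
  (∃ h3 χ3 h4 χ4, MemB P h3 χ3 ∧ MemB P h4 χ4 ∧ ∀ x, g x = h4 (f (h3 x)))

section Aux

open scoped Classical

variable {X I : Type*} {P : I → Set X}

lemma IsPartition.block_eq (hP : IsPartition P) {x : X} {i j : I}
    (hi : x ∈ P i) (hj : x ∈ P j) : i = j := by
  by_contra h
  exact Set.disjoint_left.mp (hP.2.1 h) hi hj

/-- The index of the block containing `x`. -/
noncomputable def blk (hP : IsPartition P) (x : X) : I := (hP.2.2 x).choose

lemma mem_blk (hP : IsPartition P) (x : X) : x ∈ P (blk hP x) := (hP.2.2 x).choose_spec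

lemma blk_eq (hP : IsPartition P) {x : X} {i : I} (hx : x ∈ P i) : blk hP x = i :=
  hP.block_eq (mem_blk hP x) hx

lemma greenL_images (hP : IsPartition P) {f k : X → X} {χf χk : I → I}
    (hf : MemB P f χf) (hk : MemB P k χk) (hL : GreenL P f k) :
    ∃ σ : I ≃ I, ∀ i, f '' P i = k '' P (σ i) := by
  obtain ⟨h, χh, h', χh', hh, hh', e1, e2⟩ := hL
  refine ⟨Equiv.ofBijective χh hh.2, fun i => ?_⟩
  have sub1 : ∀ i, f '' P i ⊆ k '' P (χh i) := by
    rintro i y ⟨x, hx, rfl⟩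
    exact ⟨h x, hh.1 i hx, (e1 x).symm⟩
  have sub2 : ∀ j, k '' P j ⊆ f '' P (χh' j) := by
    rintro j y ⟨x, hx, rfl⟩
    exact ⟨h' x, hh'.1 j hx, (e2 x).symm⟩
  have hχ1 : ∀ i, χf i = χk (χh i) := by
    intro i
    obtain ⟨x, hx⟩ := hP.1 i
    exact hP.block_eq (hf.1 i hx) (e1 x ▸ hk.1 (χh i) (hh.1 i hx))
  have hχ2 : ∀ j, χk j = χf (χh' j) := by
    intro j
    obtain ⟨x, hx⟩ := hP.1 j
    exact hP.block_eq (hk.1 j hx) (e2 x ▸ hf.1 (χh' j) (hh'.1 j hx))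
  have hfix : χh' (χh i) = i := hf.2.1 (by rw [← hχ2, ← hχ1])
  refine Set.Subset.antisymm (sub1 i) ?_
  have h2 := sub2 (χh i)
  rw [hfix] at h2
  exact h2

lemma greenR_card {f g : X → X} (hR : GreenR P f g) (i : I) :
    Cardinal.mk ↥(f '' P i) = Cardinal.mk ↥(g '' P i) := by
  obtain ⟨h, χh, h', χh', hh, hh', e1, e2⟩ := hR
  have hfg : f = h ∘ g := funext e1
  have hgf : g = h' ∘ f := funext e2
  refine le_antisymm ?_ ?_
  · calc Cardinal.mk ↥(f '' P i) = Cardinal.mk ↥(h '' (g '' P i)) := by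
          rw [hfg, Set.image_comp]
    _ ≤ Cardinal.mk ↥(g '' P i) := Cardinal.mk_image_le
  · calc Cardinal.mk ↥(g '' P i) = Cardinal.mk ↥(h' '' (f '' P i)) := by
          rw [hgf, Set.image_comp]
    _ ≤ Cardinal.mk ↥(f '' P i) := Cardinal.mk_image_le

/-- The chosen family of bijections between `g''P(σ i)` and `f''P i`. -/
noncomputable def bmap (hP : IsPartition P) (f g : X → X) (σ : I ≃ I)
    (hσ : ∀ i, Cardinal.mk ↥(f '' P i) = Cardinal.mk ↥(g '' P (σ i))) (i : I) :
    ↥(g '' P (σ i)) ≃ ↥(f '' P i) :=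
  Classical.choice (Cardinal.eq.mp (hσ i).symm)

lemma memσ (hP : IsPartition P) (σ : I ≃ I) (x : X) :
    x ∈ P (σ (σ.symm (blk hP x))) := by
  rw [Equiv.apply_symm_apply]; exact mem_blk hP x

/-- The middle element `k` realizing the `D`-relation. -/
noncomputable def kmap (hP : IsPartition P) (f g : X → X) (σ : I ≃ I)
    (hσ : ∀ i, Cardinal.mk ↥(f '' P i) = Cardinal.mk ↥(g '' P (σ i))) : X → X :=
  fun x => ↑(bmap hP f g σ hσ (σ.symm (blk hP x)) ⟨g x, ⟨x, memσ hP σ x, rfl⟩⟩)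

lemma kmap_eq (hP : IsPartition P) (f g : X → X) (σ : I ≃ I)
    (hσ : ∀ i, Cardinal.mk ↥(f '' P i) = Cardinal.mk ↥(g '' P (σ i)))
    {i : I} {x : X} (hx : x ∈ P (σ i)) (hm : g x ∈ g '' P (σ i)) :
    kmap hP f g σ hσ x = ↑(bmap hP f g σ hσ i ⟨g x, hm⟩) := by
  have hi : σ.symm (blk hP x) = i := by rw [blk_eq hP hx, Equiv.symm_apply_apply]
  subst hi
  rfl

lemma kmap_image (hP : IsPartition P) (f g : X → X) (σ : I ≃ I)
    (hσ : ∀ i, Cardinal.mk ↥(f '' P i) = Cardinal.mk ↥(g '' P (σ i))) (i : I) :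
    kmap hP f g σ hσ '' P (σ i) = f '' P i := by
  apply Set.Subset.antisymm
  · rintro y ⟨x, hx, rfl⟩
    rw [kmap_eq hP f g σ hσ hx ⟨x, hx, rfl⟩]
    exact (bmap hP f g σ hσ i ⟨g x, ⟨x, hx, rfl⟩⟩).2
  · intro y hy
    obtain ⟨x, hx, hgx⟩ := ((bmap hP f g σ hσ i).symm ⟨y, hy⟩).2
    refine ⟨x, hx, ?_⟩
    rw [kmap_eq hP f g σ hσ hx ⟨x, hx, rfl⟩]
    have hz : (⟨g x, ⟨x, hx, rfl⟩⟩ : ↥(g '' P (σ i))) = (bmap hP f g σ hσ i).symm ⟨y, hy⟩ :=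
      Subtype.ext hgx
    rw [hz, Equiv.apply_symm_apply]

/-- Map used to show `k R g` (first half). -/
noncomputable def rmap1 (hP : IsPartition P) (f g : X → X) (σ : I ≃ I)
    (hσ : ∀ i, Cardinal.mk ↥(f '' P i) = Cardinal.mk ↥(g '' P (σ i))) (eg : I ≃ I) : X → X :=
  fun y =>
    if hy : y ∈ g '' P (σ (σ.symm (eg.symm (blk hP y)))) then
      ↑(bmap hP f g σ hσ (σ.symm (eg.symm (blk hP y))) ⟨y, hy⟩)
    else
      ↑(bmap hP f g σ hσ (σ.symm (eg.symm (blk hP y)))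
        ⟨g (hP.1 (σ (σ.symm (eg.symm (blk hP y))))).choose,
          ⟨_, (hP.1 (σ (σ.symm (eg.symm (blk hP y))))).choose_spec, rfl⟩⟩)

lemma rmap1_mem (hP : IsPartition P) (f g : X → X) (σ : I ≃ I)
    (hσ : ∀ i, Cardinal.mk ↥(f '' P i) = Cardinal.mk ↥(g '' P (σ i))) (eg : I ≃ I) (y : X) :
    rmap1 hP f g σ hσ eg y ∈ f '' P (σ.symm (eg.symm (blk hP y))) := by
  unfold rmap1
  split
  · exact Subtype.coe_prop _
  · exact Subtype.coe_prop _

lemma rmap1_eq (hP : IsPartition P) (f g : X → X) (σ : I ≃ I)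
    (hσ : ∀ i, Cardinal.mk ↥(f '' P i) = Cardinal.mk ↥(g '' P (σ i))) (eg : I ≃ I)
    {i : I} {y : X} (hi : σ.symm (eg.symm (blk hP y)) = i) (hm : y ∈ g '' P (σ i)) :
    rmap1 hP f g σ hσ eg y = ↑(bmap hP f g σ hσ i ⟨y, hm⟩) := by
  subst hi
  unfold rmap1
  rw [dif_pos hm]

/-- Map used to show `k R g` (second half). -/
noncomputable def rmap2 (hP : IsPartition P) (f g : X → X) (σ : I ≃ I)
    (hσ : ∀ i, Cardinal.mk ↥(f '' P i) = Cardinal.mk ↥(g '' P (σ i))) (ef : I ≃ I) : X → X :=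
  fun y =>
    if hy : y ∈ f '' P (ef.symm (blk hP y)) then
      ↑((bmap hP f g σ hσ (ef.symm (blk hP y))).symm ⟨y, hy⟩)
    else
      ↑((bmap hP f g σ hσ (ef.symm (blk hP y))).symm
        ⟨f (hP.1 (ef.symm (blk hP y))).choose,
          ⟨_, (hP.1 (ef.symm (blk hP y))).choose_spec, rfl⟩⟩)

lemma rmap2_mem (hP : IsPartition P) (f g : X → X) (σ : I ≃ I)
    (hσ : ∀ i, Cardinal.mk ↥(f '' P i) = Cardinal.mk ↥(g '' P (σ i))) (ef : I ≃ I) (y : X) :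
    rmap2 hP f g σ hσ ef y ∈ g '' P (σ (ef.symm (blk hP y))) := by
  unfold rmap2
  split
  · exact Subtype.coe_prop _
  · exact Subtype.coe_prop _

lemma rmap2_eq (hP : IsPartition P) (f g : X → X) (σ : I ≃ I)
    (hσ : ∀ i, Cardinal.mk ↥(f '' P i) = Cardinal.mk ↥(g '' P (σ i))) (ef : I ≃ I)
    {i : I} {y : X} (hi : ef.symm (blk hP y) = i) (hm : y ∈ f '' P i) :
    rmap2 hP f g σ hσ ef y = ↑((bmap hP f g σ hσ i).symm ⟨y, hm⟩) := by
  subst hi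
  unfold rmap2
  rw [dif_pos hm]

lemma D_of_equiv (hP : IsPartition P) {f g : X → X} {χf χg : I → I}
    (hf : MemB P f χf) (hg : MemB P g χg) (σ : I ≃ I)
    (hσ : ∀ i, Cardinal.mk ↥(f '' P i) = Cardinal.mk ↥(g '' P (σ i))) :
    GreenD P f g := by
  classical
  set k := kmap hP f g σ hσ with hk
  -- k is in B(X,P)
  have hkB : MemB P k (fun j => χf (σ.symm j)) := by
    constructor
    · intro j x hx
      have hx' : x ∈ P (σ (σ.symm j)) := by rw [Equiv.apply_symm_apply]; exact hx
      have hky : k x ∈ f '' P (σ.symm j) := by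
        rw [hk, ← kmap_image hP f g σ hσ (σ.symm j)]
        exact ⟨x, hx', rfl⟩
      obtain ⟨z, hz, hzk⟩ := hky
      exact hzk ▸ hf.1 _ hz
    · exact hf.2.comp σ.symm.bijective
  refine ⟨k, fun j => χf (σ.symm j), hkB, ?_, ?_⟩
  · -- GreenL P f k
    have hLex : ∀ x, ∃ y, y ∈ P (σ (blk hP x)) ∧ k y = f x := by
      intro x
      have hfx : f x ∈ k '' P (σ (blk hP x)) := by
        rw [hk, kmap_image hP f g σ hσ (blk hP x)]
        exact ⟨x, mem_blk hP x, rfl⟩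
      obtain ⟨y, hy, hky⟩ := hfx
      exact ⟨y, hy, hky⟩
    choose h1 h1mem h1eq using hLex
    have hL'ex : ∀ x, ∃ y, y ∈ P (σ.symm (blk hP x)) ∧ f y = k x := by
      intro x
      have hkx : k x ∈ f '' P (σ.symm (blk hP x)) := by
        rw [hk, kmap_eq hP f g σ hσ (memσ hP σ x) ⟨x, memσ hP σ x, rfl⟩]
        exact Subtype.coe_prop _
      obtain ⟨y, hy, hfy⟩ := hkx
      exact ⟨y, hy, hfy⟩
    choose h2 h2mem h2eq using hL'ex
    refine ⟨h1, fun i => σ i, h2, fun j => σ.symm j, ?_, ?_, ?_, ?_⟩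
    · exact ⟨fun i x hx => by rw [← blk_eq hP hx]; exact h1mem x, σ.bijective⟩
    · exact ⟨fun j x hx => by rw [← blk_eq hP hx]; exact h2mem x, σ.symm.bijective⟩
    · exact fun x => (h1eq x).symm
    · exact fun x => (h2eq x).symm
  · -- GreenR P k g
    set ef := Equiv.ofBijective χf hf.2 with hef
    set eg := Equiv.ofBijective χg hg.2 with heg
    refine ⟨rmap1 hP f g σ hσ eg, fun j => χf (σ.symm (eg.symm j)),
      rmap2 hP f g σ hσ ef, fun j => χg (σ (ef.symm j)), ?_, ?_, ?_, ?_⟩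
    · constructor
      · intro j y hy
        have hm := rmap1_mem hP f g σ hσ eg y
        rw [blk_eq hP hy] at hm
        obtain ⟨z, hz, hzy⟩ := hm
        exact hzy ▸ hf.1 _ hz
      · exact hf.2.comp (σ.symm.bijective.comp eg.symm.bijective)
    · constructor
      · intro j y hy
        have hm := rmap2_mem hP f g σ hσ ef y
        rw [blk_eq hP hy] at hm
        obtain ⟨z, hz, hzy⟩ := hm
        exact hzy ▸ hg.1 _ hz
      · exact (hg.2.comp σ.bijective).comp ef.symm.bijective
    · -- k x = rmap1 (g x)
      intro x
      have hxσ : x ∈ P (σ (σ.symm (blk hP x))) := memσ hP σ x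
      have hgx : g x ∈ P (χg (σ (σ.symm (blk hP x)))) := hg.1 _ hxσ
      have hidx : σ.symm (eg.symm (blk hP (g x))) = σ.symm (blk hP x) := by
        rw [blk_eq hP hgx]
        have : χg (σ (σ.symm (blk hP x))) = eg (σ (σ.symm (blk hP x))) := rfl
        rw [this, Equiv.symm_apply_apply, Equiv.symm_apply_apply]
      rw [rmap1_eq hP f g σ hσ eg hidx ⟨x, hxσ, rfl⟩,
        hk, kmap_eq hP f g σ hσ hxσ ⟨x, hxσ, rfl⟩]
    · -- g x = rmap2 (k x)
      intro x
      have hxσ : x ∈ P (σ (σ.symm (blk hP x))) := memσ hP σ x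
      have hkx : k x = ↑(bmap hP f g σ hσ (σ.symm (blk hP x)) ⟨g x, ⟨x, hxσ, rfl⟩⟩) := by
        rw [hk, kmap_eq hP f g σ hσ hxσ ⟨x, hxσ, rfl⟩]
      have hm2 : k x ∈ f '' P (σ.symm (blk hP x)) := by
        rw [hkx]; exact Subtype.coe_prop _
      have hkblk : k x ∈ P (χf (σ.symm (blk hP x))) := by
        obtain ⟨z, hz, hzk⟩ := hm2
        exact hzk ▸ hf.1 _ hz
      have hidx : ef.symm (blk hP (k x)) = σ.symm (blk hP x) := by
        rw [blk_eq hP hkblk]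
        have : χf (σ.symm (blk hP x)) = ef (σ.symm (blk hP x)) := rfl
        rw [this, Equiv.symm_apply_apply]
      rw [rmap2_eq hP f g σ hσ ef hidx hm2]
      have hz : (⟨k x, hm2⟩ : ↥(f '' P (σ.symm (blk hP x)))) =
          bmap hP f g σ hσ (σ.symm (blk hP x)) ⟨g x, ⟨x, hxσ, rfl⟩⟩ :=
        Subtype.ext hkx
      rw [hz, Equiv.symm_apply_apply]

end Aux

/-- `f D g` in `B(X,P)` iff for every cardinal `λ` the number of indices `i`
with `|f '' (P i)| = λ` equals the number of indices `i` with `|g '' (P i)| = λ`. -/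
theorem D_iff_counts {X I : Type*} [Nonempty X] (P : I → Set X) (hP : IsPartition P)
    (f g : X → X) (χf χg : I → I) (hf : MemB P f χf) (hg : MemB P g χg) :
    GreenD P f g ↔
      ∀ lam : Cardinal,
        Cardinal.mk ↥{i : I | Cardinal.mk ↥(f '' (P i)) = lam} =
          Cardinal.mk ↥{i : I | Cardinal.mk ↥(g '' (P i)) = lam} := by
  constructor
  · rintro ⟨k, χk, hk, hL, hR⟩
    obtain ⟨σ, hσ⟩ := greenL_images hP hf hk hL
    have key : ∀ i, Cardinal.mk ↥(f '' P i) = Cardinal.mk ↥(g '' P (σ i)) := by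
      intro i
      rw [hσ i]
      exact greenR_card hR (σ i)
    intro lam
    exact Cardinal.mk_congr
      (Equiv.subtypeEquiv σ (fun i => by simp only [Set.mem_setOf_eq, key i]))
  · intro hcount
    have e : ∀ lam : Cardinal,
        {i : I // Cardinal.mk ↥(f '' P i) = lam} ≃ {i : I // Cardinal.mk ↥(g '' P i) = lam} :=
      fun lam => Classical.choice (Cardinal.eq.mp (hcount lam))
    let σ : I ≃ I := Equiv.ofFiberEquiv e
    have hσ : ∀ i, Cardinal.mk ↥(f '' P i) = Cardinal.mk ↥(g '' P (σ i)) :=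
      fun i => (Equiv.ofFiberEquiv_map e i).symm
    exact D_of_equiv hP hf hg σ hσ
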